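/- Let d ≥ 1 and let T be a centrally symmetric triangulation of a convex polygon with 2d+2 vertices that contains the diagonal {0,0̄}. Let U⁻ be the centrally symmetric triangulation whose interior edges are {0,0̄}, the edges {0,x} for 2 ≤ x ≤ d, and the edges {0̄,x̄} for 2 ≤ x ≤ d. Then δ(T, U⁻) ≤ d − 1. -/

import Mathlib

namespace Cyclo

/-! Centrally symmetric triangulations of a convex polygon with `n` vertices,
labelled clockwise by `ZMod n`. -/

/-- The vertex opposite to `x` of the polygon with `n` vertices. -/
def opp (n : ℕ) (x : ZMod n) : ZMod n := x + ((n / 2 : ℕ) : ZMod n)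

/-- `e` is an edge on the polygon: a set of two distinct vertices. -/
def IsEdge (n : ℕ) (e : Finset (ZMod n)) : Prop :=
  ∃ x y : ZMod n, x ≠ y ∧ e = {x, y}

/-- `e` is a boundary edge of the polygon. -/
def IsBoundaryEdge (n : ℕ) (e : Finset (ZMod n)) : Prop :=
  ∃ x : ZMod n, e = {x, x + 1}

/-- `y` lies strictly between `x` and `z` in the clockwise cyclic order. -/
def Sbtw (n : ℕ) (x y z : ZMod n) : Prop :=
  0 < (y - x).val ∧ (y - x).val < (z - x).val

/-- Two edges cross: exactly one endpoint of one lies strictly between the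
endpoints of the other in the clockwise cyclic order. -/
def Crosses (n : ℕ) (e f : Finset (ZMod n)) : Prop :=
  ∃ a b c d : ZMod n, e = {a, b} ∧ f = {c, d} ∧ Sbtw n a c b ∧ Sbtw n b d a

/-- A triangulation: a maximal set of pairwise non-crossing edges. -/
def IsTriangulation (n : ℕ) (T : Set (Finset (ZMod n))) : Prop :=
  (∀ e ∈ T, IsEdge n e) ∧
  (∀ e ∈ T, ∀ f ∈ T, ¬ Crosses n e f) ∧
  (∀ e, IsEdge n e → (∀ f ∈ T, ¬ Crosses n e f ∧ ¬ Crosses n f e) → e ∈ T)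

/-- `T` is centrally symmetric. -/
def IsCS (n : ℕ) (T : Set (Finset (ZMod n))) : Prop :=
  ∀ x y : ZMod n, ({x, y} : Finset (ZMod n)) ∈ T →
    ({opp n x, opp n y} : Finset (ZMod n)) ∈ T

/-- `T` is a centrally symmetric triangulation. -/
def IsCST (n : ℕ) (T : Set (Finset (ZMod n))) : Prop :=
  IsTriangulation n T ∧ IsCS n T

/-- `T'` is obtained from `T` by flipping the interior edge `{x,x'}` (and its
centrally symmetric copy `{x̄,x̄'}`): the four boundary edges of the quadrilateral
with diagonal `{x,x'}` belong to `T`, and `{x,x'}`, `{x̄,x̄'}` are replaced by the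
opposite diagonals `{y,y'}`, `{ȳ,ȳ'}`. -/
def IsFlip (n : ℕ) (T T' : Set (Finset (ZMod n))) : Prop :=
  IsCST n T ∧ IsCST n T' ∧
  ∃ x x' y y' : ZMod n,
    ¬ IsBoundaryEdge n {x, x'} ∧
    ({x, x'} : Finset (ZMod n)) ∈ T ∧ ({x, y} : Finset (ZMod n)) ∈ T ∧
    ({y, x'} : Finset (ZMod n)) ∈ T ∧ ({x', y'} : Finset (ZMod n)) ∈ T ∧
    ({y', x} : Finset (ZMod n)) ∈ T ∧
    T' = (T \ {({x, x'} : Finset (ZMod n)), {opp n x, opp n x'}}) ∪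
         {({y, y'} : Finset (ZMod n)), {opp n y, opp n y'}}

/-- The flip graph (on all sets of edges; non-triangulations are isolated vertices). -/
def flipGraph (n : ℕ) : SimpleGraph (Set (Finset (ZMod n))) :=
  SimpleGraph.fromRel (IsFlip n)

/-- The flip distance of two centrally symmetric triangulations. -/
noncomputable def delta (n : ℕ) (T T' : Set (Finset (ZMod n))) : ℕ := (flipGraph n).dist T T'

/-- The flip graph on the centrally symmetric triangulations of the `n`-gon;
it is isomorphic to the graph of the `(n/2 - 1)`-dimensional cyclohedron. -/
def flipGraphCS (n : ℕ) : SimpleGraph {T : Set (Finset (ZMod n)) // IsCST n T} :=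
  SimpleGraph.fromRel fun T T' => IsFlip n T.1 T'.1

/-- `g 0, …, g k` is a geodesic from `Tm` to `Tp`. -/
def IsGeodesic (n : ℕ) (Tm Tp : Set (Finset (ZMod n)))
    (g : ℕ → Set (Finset (ZMod n))) (k : ℕ) : Prop :=
  g 0 = Tm ∧ g k = Tp ∧ (∀ i < k, (flipGraph n).Adj (g i) (g (i + 1))) ∧
    k = delta n Tm Tp

/-- The flip transforming `T` into `T'` is incident to the boundary edge `{p,q}`:
it removes `{p,r}` or `{q,r}`, where `r` is the apex of the triangle of `T` on `{p,q}`. -/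
def FlipIncident (n : ℕ) (T T' : Set (Finset (ZMod n))) (p q : ZMod n) : Prop :=
  ∃ r : ZMod n, ({p, r} : Finset (ZMod n)) ∈ T ∧ ({q, r} : Finset (ZMod n)) ∈ T ∧
    (({p, r} : Finset (ZMod n)) ∉ T' ∨ ({q, r} : Finset (ZMod n)) ∉ T')

/-- The number of flips along the path `g 0, …, g k` incident to `{p,q}`. -/
noncomputable def incidentCount (n : ℕ) (g : ℕ → Set (Finset (ZMod n))) (k : ℕ) (p q : ZMod n) : ℕ :=
  Nat.card {i : Fin k // FlipIncident n (g i.1) (g (i.1 + 1)) p q}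

/-- `x`, `y`, `z` are the vertices of a triangle of `T`. -/
def IsTriangleOf (n : ℕ) (T : Set (Finset (ZMod n))) (x y z : ZMod n) : Prop :=
  ({x, y} : Finset (ZMod n)) ∈ T ∧ ({y, z} : Finset (ZMod n)) ∈ T ∧
    ({x, z} : Finset (ZMod n)) ∈ T

/-- The three edges of the triangle with vertices `x`, `y`, `z`. -/
def triEdges (n : ℕ) (x y z : ZMod n) : Set (Finset (ZMod n)) :=
  {{x, y}, {y, z}, {x, z}}

/-- Relabelling map for the deletion of vertex `p` from the polygon with `2e+2`
vertices: `p` is replaced by `q = p+1`, `p̄` by `q̄`, and the remaining `2e`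
vertices are relabelled clockwise by `ZMod (2e)` (with `q ↦ 0`), so that
opposite vertices again differ by `e`. -/
def delV (e : ℕ) (p x : ZMod (2 * e + 2)) : ZMod (2 * e) :=
  ((if (x - p).val ≤ e + 1 then (x - p).val - 1 else (x - p).val - 2 : ℕ) : ZMod (2 * e))

/-- Deletion of vertex `p` from `T`: remove the edges `{p,p+1}` and `{p̄,p̄+1}`,
replace `p` by `p+1` and `p̄` by `p̄+1` in every other edge, and relabel. -/
def delT (e : ℕ) (p : ZMod (2 * e + 2)) (T : Set (Finset (ZMod (2 * e + 2)))) :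
    Set (Finset (ZMod (2 * e))) :=
  (fun s => s.image (delV e p)) ''
    (T \ {({p, p + 1} : Finset (ZMod (2 * e + 2))),
          {opp (2 * e + 2) p, opp (2 * e + 2) p + 1}})

/-- `DelButOne h k Tm Tp p₀ Sm Sp` holds when the pair `(Sm, Sp)` is obtained from
the pair `(Tm, Tp)` by successively deleting `k` of the `k+1` consecutive vertices
`p₀, p₀+1, …, p₀+k` (all but one of them), the deletions being performed in the
successively smaller polygons with the surviving vertices keeping their cyclic order. -/
def DelButOne : (h k : ℕ) → Set (Finset (ZMod (2 * (h + k) + 2))) →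
    Set (Finset (ZMod (2 * (h + k) + 2))) → ZMod (2 * (h + k) + 2) →
    Set (Finset (ZMod (2 * h + 2))) → Set (Finset (ZMod (2 * h + 2))) → Prop
  | _, 0, Tm, Tp, _, Sm, Sp => Sm = Tm ∧ Sp = Tp
  | h, k + 1, Tm, Tp, p₀, Sm, Sp =>
      ∃ j : ℕ, j ≤ k + 1 ∧
        DelButOne h k (delT (h + k + 1) (p₀ + (j : ZMod (2 * (h + (k + 1)) + 2))) Tm)
          (delT (h + k + 1) (p₀ + (j : ZMod (2 * (h + (k + 1)) + 2))) Tp)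
          (delV (h + k + 1) (p₀ + (j : ZMod (2 * (h + (k + 1)) + 2))) p₀) Sm Sp

/-- The set of boundary edges of the polygon with `n` vertices. -/
def boundarySet (n : ℕ) : Set (Finset (ZMod n)) := {e | IsBoundaryEdge n e}

/-- Closure of a set of edges under the central symmetry. -/
def symCl (n : ℕ) (S : Set (Finset (ZMod n))) : Set (Finset (ZMod n)) :=
  S ∪ (fun e => e.image (opp n)) '' S


/-- The interior edges (up to central symmetry) of the triangulation `A⁻`. -/
def AminusInterior (b c d : ℕ) : Set (Finset (ZMod (2 * d + 2))) :=
  {({(0 : ZMod (2 * d + 2)), opp (2 * d + 2) 0} : Finset (ZMod (2 * d + 2)))} ∪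
  {e | ∃ x : ℕ, c ≤ x ∧ x ≤ d ∧
    e = ({(0 : ZMod (2 * d + 2)), (x : ZMod (2 * d + 2))} : Finset (ZMod (2 * d + 2)))} ∪
  {e | ∃ x : ℕ, b ≤ x ∧ x ≤ c ∧
    e = ({(1 : ZMod (2 * d + 2)), (x : ZMod (2 * d + 2))} : Finset (ZMod (2 * d + 2)))} ∪
  {e | ∃ i : ℕ, 2 ≤ i ∧ i ≤ (b - 1) / 2 ∧
    e = ({(i : ZMod (2 * d + 2)), ((b + 1 - i : ℕ) : ZMod (2 * d + 2))} : Finset (ZMod (2 * d + 2)))} ∪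
  {e | ∃ i : ℕ, 2 ≤ i ∧ i ≤ b / 2 ∧
    e = ({(i : ZMod (2 * d + 2)), ((b + 2 - i : ℕ) : ZMod (2 * d + 2))} : Finset (ZMod (2 * d + 2)))}

/-- The triangulation `A⁻` of the `(2d+2)`-gon: its edges are the boundary edges,
the interior edges listed in `AminusInterior`, and their centrally symmetric copies. -/
def AminusSet (b c d : ℕ) : Set (Finset (ZMod (2 * d + 2))) :=
  boundarySet (2 * d + 2) ∪ symCl (2 * d + 2) (AminusInterior b c d)

/-- The edges that any triangulation `A⁺` of an `(a,b,c,d)`-pair must contain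
(`l = a + b - d + 2`): the edges `{1,d̄}` and `{l,c̄}`, the centrally symmetric
zigzag crossing `{0,0̄}`, and the centrally symmetric copies of all of these. -/
def AplusCore (a b c d : ℕ) : Set (Finset (ZMod (2 * d + 2))) :=
  symCl (2 * d + 2)
    ({({(1 : ZMod (2 * d + 2)), opp (2 * d + 2) (d : ZMod (2 * d + 2))} : Finset (ZMod (2 * d + 2)))} ∪
     {({((a + b - d + 2 : ℕ) : ZMod (2 * d + 2)),
        opp (2 * d + 2) (c : ZMod (2 * d + 2))} : Finset (ZMod (2 * d + 2)))} ∪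
     {e | ∃ i : ℕ, a + b - d + 2 ≤ i ∧ i ≤ c ∧
       e = ({(i : ZMod (2 * d + 2)),
             opp (2 * d + 2) ((c + (a + b - d + 2) - i : ℕ) : ZMod (2 * d + 2))} : Finset (ZMod (2 * d + 2)))} ∪
     {e | ∃ i : ℕ, a + b - d + 2 ≤ i ∧ i ≤ c - 1 ∧
       e = ({(i : ZMod (2 * d + 2)),
             opp (2 * d + 2) ((c + (a + b - d + 2) - 1 - i : ℕ) : ZMod (2 * d + 2))} : Finset (ZMod (2 * d + 2)))})

/-- `T` is an admissible triangulation `A⁺` for an `(a,b,c,d)`-pair: a centrally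
symmetric triangulation containing `AplusCore`, all of whose remaining interior
edges join a vertex of `{1,…,l}` to a vertex of `{c̄,…,d̄}` or a vertex of
`{1̄,…,l̄}` to a vertex of `{c,…,d}`, and in which every vertex of `{c̄,…,d̄}` is
joined to at least two vertices of `{1,…,l}` (so combs with at least two teeth
are attached at the vertices `c̄,…,d̄` and their opposites). -/
def IsAplus (a b c d : ℕ) (T : Set (Finset (ZMod (2 * d + 2)))) : Prop :=
  IsCST (2 * d + 2) T ∧ AplusCore a b c d ⊆ T ∧
  (∀ e ∈ T, ¬ IsBoundaryEdge (2 * d + 2) e → e ∉ AplusCore a b c d →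
    ∃ i j : ℕ, 1 ≤ i ∧ i ≤ a + b - d + 2 ∧ c ≤ j ∧ j ≤ d ∧
      (e = ({(i : ZMod (2 * d + 2)), opp (2 * d + 2) (j : ZMod (2 * d + 2))} : Finset (ZMod (2 * d + 2))) ∨
       e = ({opp (2 * d + 2) (i : ZMod (2 * d + 2)), (j : ZMod (2 * d + 2))} : Finset (ZMod (2 * d + 2))))) ∧
  (∀ j : ℕ, c ≤ j → j ≤ d →
    ∃ i₁ i₂ : ℕ, 1 ≤ i₁ ∧ i₁ ≤ a + b - d + 2 ∧ 1 ≤ i₂ ∧ i₂ ≤ a + b - d + 2 ∧ i₁ ≠ i₂ ∧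
      ({(i₁ : ZMod (2 * d + 2)), opp (2 * d + 2) (j : ZMod (2 * d + 2))} : Finset (ZMod (2 * d + 2))) ∈ T ∧
      ({(i₂ : ZMod (2 * d + 2)), opp (2 * d + 2) (j : ZMod (2 * d + 2))} : Finset (ZMod (2 * d + 2))) ∈ T)

/-- `(Am, Ap)` is an `(a,b,c,d)`-pair. -/
def IsABCDPair (a b c d : ℕ) (Am Ap : Set (Finset (ZMod (2 * d + 2)))) : Prop :=
  b < c ∧ c ≤ d ∧ d ≤ a + b ∧ 2 * a + b + 2 < 2 * d ∧
  Am = AminusSet b c d ∧ IsAplus a b c d Ap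

/-- The triangulation `U⁻`: interior edges `{0,0̄}`, `{0,x}` for `2 ≤ x ≤ d`,
and `{0̄,x̄}` for `2 ≤ x ≤ d`. -/
def UminusSet (d : ℕ) : Set (Finset (ZMod (2 * d + 2))) :=
  boundarySet (2 * d + 2) ∪ symCl (2 * d + 2)
    ({({(0 : ZMod (2 * d + 2)), opp (2 * d + 2) 0} : Finset (ZMod (2 * d + 2)))} ∪
     {e | ∃ x : ℕ, 2 ≤ x ∧ x ≤ d ∧
       e = ({(0 : ZMod (2 * d + 2)), (x : ZMod (2 * d + 2))} : Finset (ZMod (2 * d + 2)))})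

/-- The triangulation `U⁺`: interior edges the diagonal `{x,x̄}`, the edges `{0,v}`
for `v ∈ {2,…,x} ∪ {x̄,…,2d}`, and their centrally symmetric copies. -/
def UplusSet (d x : ℕ) : Set (Finset (ZMod (2 * d + 2))) :=
  boundarySet (2 * d + 2) ∪ symCl (2 * d + 2)
    ({({(x : ZMod (2 * d + 2)), opp (2 * d + 2) (x : ZMod (2 * d + 2))} : Finset (ZMod (2 * d + 2)))} ∪
     {e | ∃ v : ℕ, ((2 ≤ v ∧ v ≤ x) ∨ (x + d + 1 ≤ v ∧ v ≤ 2 * d)) ∧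
       e = ({(0 : ZMod (2 * d + 2)), (v : ZMod (2 * d + 2))} : Finset (ZMod (2 * d + 2)))})


lemma val_sub' {n : ℕ} [NeZero n] (x y : ZMod n) :
    (y - x).val = if x.val ≤ y.val then y.val - x.val else y.val + n - x.val := by
  have hx := ZMod.val_lt x
  have hy := ZMod.val_lt y
  split_ifs with h
  · exact ZMod.val_sub h
  · have hx0 : x ≠ 0 := by intro h0; subst h0; simp at h
    rw [sub_eq_add_neg, ZMod.val_add, ZMod.neg_val, if_neg hx0,
      Nat.mod_eq_of_lt (by omega)]
    omega

lemma sbtw_iff {n : ℕ} [NeZero n] (x y z : ZMod n) :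
    Sbtw n x y z ↔ (0 < (if x.val ≤ y.val then y.val - x.val else y.val + n - x.val) ∧
      (if x.val ≤ y.val then y.val - x.val else y.val + n - x.val) <
      (if x.val ≤ z.val then z.val - x.val else z.val + n - x.val)) := by
  rw [Sbtw, val_sub', val_sub']

lemma pair_eq {α : Type*} [DecidableEq α] {a b c d : α} :
    ({a, b} : Finset α) = {c, d} ↔ (a = c ∧ b = d) ∨ (a = d ∧ b = c) := by
  rw [← Finset.coe_inj]
  simp only [Finset.coe_insert, Finset.coe_singleton]
  exact Set.pair_eq_pair_iff

lemma val_inj {n : ℕ} [NeZero n] {a b : ZMod n} (h : a.val = b.val) : a = b :=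
  ZMod.val_injective n h

lemma crosses_intro {n : ℕ} {x y c d : ZMod n} (h1 : Sbtw n x c y) (h2 : Sbtw n y d x) :
    Crosses n {x, y} {c, d} := ⟨x, y, c, d, rfl, rfl, h1, h2⟩

lemma crosses_elim {n : ℕ} [NeZero n] {x y : ZMod n} {f : Finset (ZMod n)}
    (h : Crosses n ({x, y} : Finset (ZMod n)) f) :
    ∃ c d : ZMod n, f = {c, d} ∧ Sbtw n x c y ∧ Sbtw n y d x := by
  obtain ⟨a, b, c, d, he, hf, h1, h2⟩ := h
  rcases pair_eq.mp he with ⟨rfl, rfl⟩ | ⟨rfl, rfl⟩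
  · exact ⟨c, d, hf, h1, h2⟩
  · exact ⟨d, c, hf.trans (pair_eq.mpr (Or.inr ⟨rfl, rfl⟩)), h2, h1⟩

lemma crosses_symm {n : ℕ} [NeZero n] {e f : Finset (ZMod n)} (h : Crosses n e f) :
    Crosses n f e := by
  obtain ⟨a, b, c, d, he, hf, h1, h2⟩ := h
  refine ⟨c, d, b, a, hf, he.trans (pair_eq.mpr (Or.inr ⟨rfl, rfl⟩)), ?_, ?_⟩ <;>
  · have va := ZMod.val_lt a; have vb := ZMod.val_lt b
    have vc := ZMod.val_lt c; have vd := ZMod.val_lt d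
    rw [sbtw_iff] at *
    split_ifs at * <;> omega

lemma sbtw_add {n : ℕ} (x y z t : ZMod n) :
    Sbtw n (x + t) (y + t) (z + t) ↔ Sbtw n x y z := by
  simp [Sbtw, add_sub_add_right_eq_sub]

lemma image_pair {α β : Type*} [DecidableEq α] [DecidableEq β] (f : α → β) (a b : α) :
    ({a, b} : Finset α).image f = {f a, f b} := by
  simp [Finset.image_insert]

lemma crosses_add {n : ℕ} [NeZero n] (t : ZMod n) {e f : Finset (ZMod n)}
    (h : Crosses n e f) : Crosses n (e.image (· + t)) (f.image (· + t)) := by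
  obtain ⟨a, b, c, d, he, hf, h1, h2⟩ := h
  exact ⟨a + t, b + t, c + t, d + t, by rw [he, image_pair], by rw [hf, image_pair],
    (sbtw_add _ _ _ _).mpr h1, (sbtw_add _ _ _ _).mpr h2⟩

-- d-specific
instance instNZ (d : ℕ) : NeZero (2 * d + 2) := ⟨by omega⟩

lemma vcast {d k : ℕ} (h : k < 2 * d + 2) : ((k : ℕ) : ZMod (2 * d + 2)).val = k :=
  ZMod.val_natCast_of_lt h

lemma opp_eq (d : ℕ) (x : ZMod (2 * d + 2)) :
    opp (2 * d + 2) x = x + ((d + 1 : ℕ) : ZMod (2 * d + 2)) := by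
  rw [opp, show (2 * d + 2) / 2 = d + 1 by omega]

lemma opp_val (d : ℕ) (x : ZMod (2 * d + 2)) :
    (opp (2 * d + 2) x).val = if x.val ≤ d then x.val + (d + 1) else x.val - (d + 1) := by
  have hx := ZMod.val_lt x
  rw [opp_eq, ZMod.val_add, vcast (by omega)]
  split_ifs with h
  · rw [Nat.mod_eq_of_lt (by omega)]
  · rw [Nat.mod_eq_sub_mod (by omega), Nat.mod_eq_of_lt (by omega)]
    omega

lemma opp_opp (d : ℕ) (x : ZMod (2 * d + 2)) :
    opp (2 * d + 2) (opp (2 * d + 2) x) = x := by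
  apply val_inj
  have hx := ZMod.val_lt x
  rw [opp_val, opp_val]
  split_ifs <;> omega

lemma val_add_one (d : ℕ) (x : ZMod (2 * d + 2)) :
    (x + 1).val = if x.val = 2 * d + 1 then 0 else x.val + 1 := by
  have hx := ZMod.val_lt x
  have h1 : (1 : ZMod (2 * d + 2)).val = 1 := by
    rw [show (1 : ZMod (2*d+2)) = ((1:ℕ) : ZMod (2*d+2)) by norm_cast, vcast (by omega)]
  rw [ZMod.val_add, h1]
  split_ifs with h
  · rw [h, show 2*d+1+1 = 2*d+2 by omega, Nat.mod_self]
  · rw [Nat.mod_eq_of_lt (by omega)]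

lemma not_crosses_boundary (d : ℕ) (x : ZMod (2 * d + 2)) (f : Finset (ZMod (2 * d + 2))) :
    ¬ Crosses (2 * d + 2) ({x, x + 1} : Finset (ZMod (2 * d + 2))) f := by
  rintro h
  obtain ⟨c, c', _, h1, h2⟩ := crosses_elim h
  have hx := ZMod.val_lt x
  have hc := ZMod.val_lt c
  have hc' := ZMod.val_lt c'
  have h3 := val_add_one d x
  rw [sbtw_iff] at h1 h2
  split_ifs at h1 h2 h3 <;> omega

lemma ne_add_one (d : ℕ) (x : ZMod (2 * d + 2)) : x ≠ x + 1 := by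
  intro h
  have := congrArg ZMod.val h
  rw [val_add_one] at this
  have hx := ZMod.val_lt x
  split_ifs at this <;> omega

lemma boundary_mem {d : ℕ} {T : Set (Finset (ZMod (2 * d + 2)))}
    (hT : IsTriangulation (2 * d + 2) T) (x : ZMod (2 * d + 2)) :
    ({x, x + 1} : Finset (ZMod (2 * d + 2))) ∈ T := by
  refine hT.2.2 _ ⟨x, x + 1, ne_add_one d x, rfl⟩ fun f hf =>
    ⟨not_crosses_boundary d x f, fun h => not_crosses_boundary d x f (crosses_symm h)⟩


lemma val_sub_frame {n : ℕ} [NeZero n] (r x y : ZMod n) :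
    (y - x).val = if (x - r).val ≤ (y - r).val then (y - r).val - (x - r).val
      else (y - r).val + n - (x - r).val := by
  have h : y - x = (y - r) - (x - r) := by ring
  rw [h, val_sub']

lemma val_sub_pos {n : ℕ} [NeZero n] {x y : ZMod n} (h : 0 < (y - x).val) : y ≠ x := by
  intro he; rw [he, sub_self, ZMod.val_zero] at h; omega

lemma eq_of_val_sub_eq {n : ℕ} [NeZero n] {x y z : ZMod n}
    (h : (y - x).val = (z - x).val) : y = z :=
  sub_left_inj.mp (val_inj h)

lemma ear {d : ℕ} {T : Set (Finset (ZMod (2 * d + 2)))}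
    (hT : IsTriangulation (2 * d + 2) T) {x y : ZMod (2 * d + 2)}
    (hxy : ({x, y} : Finset (ZMod (2 * d + 2))) ∈ T) (h2 : 2 ≤ (y - x).val) :
    ∃ z : ZMod (2 * d + 2), Sbtw (2 * d + 2) x z y ∧
      ({x, z} : Finset (ZMod (2 * d + 2))) ∈ T ∧
      ({z, y} : Finset (ZMod (2 * d + 2))) ∈ T := by
  classical
  have hy1T : ({y - 1, y} : Finset (ZMod (2*d+2))) ∈ T := by
    have := boundary_mem hT (y - 1)
    rwa [sub_add_cancel] at this
  have hy1v : (y - 1 - x).val = (y - x).val - 1 := by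
    have he : y - 1 - x = (y - x) - 1 := by ring
    rw [he, val_sub']
    have h1 : (1 : ZMod (2*d+2)).val = 1 := by
      rw [show (1 : ZMod (2*d+2)) = ((1 : ℕ) : ZMod (2*d+2)) by norm_cast, vcast (by omega)]
    have := ZMod.val_lt (y - x)
    rw [h1]
    split_ifs <;> omega
  have hy1s : Sbtw (2*d+2) x (y - 1) y := by constructor <;> rw [hy1v] <;> omega
  set Sk : Set ℕ := {k | ∃ v : ZMod (2*d+2), (Sbtw (2*d+2) x v y ∧ ({v, y} : Finset (ZMod (2*d+2))) ∈ T) ∧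
    (v - x).val = k} with hSk
  have hne : Sk.Nonempty := ⟨_, y - 1, ⟨hy1s, hy1T⟩, rfl⟩
  obtain ⟨z, ⟨hzs, hzT⟩, hzk⟩ := Nat.sInf_mem hne
  have hmin : ∀ v : ZMod (2*d+2), Sbtw (2*d+2) x v y → ({v, y} : Finset (ZMod (2*d+2))) ∈ T →
      (z - x).val ≤ (v - x).val := by
    intro v h1 h2'
    rw [hzk]; exact Nat.sInf_le ⟨v, ⟨h1, h2'⟩, rfl⟩
  refine ⟨z, hzs, ?_, hzT⟩
  have hxz : x ≠ z := (val_sub_pos hzs.1).symm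
  refine hT.2.2 _ ⟨x, z, hxz, rfl⟩ fun f hf => ?_
  have key : ¬ Crosses (2*d+2) ({x, z} : Finset (ZMod (2*d+2))) f := by
    intro hc
    obtain ⟨c, d', hfe, hc1, hc2⟩ := crosses_elim hc
    have h00 : (x - x).val = 0 := by simp
    have hvz := ZMod.val_lt (z - x)
    have hvc := ZMod.val_lt (c - x)
    have hvd := ZMod.val_lt (d' - x)
    have hvy := ZMod.val_lt (y - x)
    rw [Sbtw, val_sub_frame x z d', val_sub_frame x z x, h00] at hc2
    unfold Sbtw at hzs hc1
    have hd : (z - x).val < (d' - x).val := by split_ifs at hc2 <;> omega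
    clear hc2
    rcases lt_trichotomy ((d' - x).val) ((y - x).val) with hlt | heq | hgt
    · have hcr : Crosses (2*d+2) ({z, y} : Finset (ZMod (2*d+2))) ({d', c} : Finset (ZMod (2*d+2))) := by
        apply crosses_intro
        · rw [Sbtw, val_sub_frame x z d', val_sub_frame x z y]
          split_ifs <;> omega
        · rw [Sbtw, val_sub_frame x y c, val_sub_frame x y z]
          split_ifs <;> omega
      have hfe2 : f = ({d', c} : Finset (ZMod (2*d+2))) :=
        hfe.trans (pair_eq.mpr (Or.inr ⟨rfl, rfl⟩))
      exact hT.2.1 _ hzT _ hf (hfe2 ▸ hcr)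
    · have hdy : d' = y := eq_of_val_sub_eq heq
      subst hdy
      have := hmin c ⟨hc1.1, by omega⟩ (by rw [← hfe]; exact hf)
      omega
    · have hcr : Crosses (2*d+2) ({x, y} : Finset (ZMod (2*d+2))) ({c, d'} : Finset (ZMod (2*d+2))) := by
        apply crosses_intro
        · exact ⟨hc1.1, by omega⟩
        · rw [Sbtw, val_sub_frame x y d', val_sub_frame x y x, h00]
          split_ifs <;> omega
      exact hT.2.1 _ hxy _ hf (hfe ▸ hcr)
  exact ⟨key, fun h => key (crosses_symm h)⟩


lemma pair_val {n : ℕ} [NeZero n] {u v u' v' : ZMod n}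
    (h : ({u, v} : Finset (ZMod n)) = {u', v'}) :
    (u.val = u'.val ∧ v.val = v'.val) ∨ (u.val = v'.val ∧ v.val = u'.val) := by
  rcases pair_eq.mp h with ⟨h1, h2⟩ | ⟨h1, h2⟩
  · exact Or.inl ⟨congrArg ZMod.val h1, congrArg ZMod.val h2⟩
  · exact Or.inr ⟨congrArg ZMod.val h1, congrArg ZMod.val h2⟩

open Finset in
set_option maxHeartbeats 1000000 in
lemma flip_step (d : ℕ) (hd : 1 ≤ d) (T : Set (Finset (ZMod (2 * d + 2))))
    (hT : IsCST (2 * d + 2) T)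
    (hdiag : ({(0 : ZMod (2 * d + 2)), opp (2 * d + 2) 0} : Finset (ZMod (2 * d + 2))) ∈ T)
    (k : ℕ) (hk2 : 2 ≤ k) (hkd : k ≤ d)
    (hkout : ({(0 : ZMod (2 * d + 2)), ((k : ℕ) : ZMod (2 * d + 2))} : Finset (ZMod (2 * d + 2))) ∉ T)
    (hkmin : ∀ v : ℕ, 2 ≤ v → v < k →
      ({(0 : ZMod (2 * d + 2)), ((v : ℕ) : ZMod (2 * d + 2))} : Finset (ZMod (2 * d + 2))) ∈ T) :
    ∃ T' w', IsCST (2 * d + 2) T' ∧ (flipGraph (2 * d + 2)).Adj T T' ∧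
      ({(0 : ZMod (2 * d + 2)), opp (2 * d + 2) 0} : Finset (ZMod (2 * d + 2))) ∈ T' ∧
      k ≤ w' ∧ w' ≤ d ∧
      (∀ v : ℕ, 2 ≤ v → v ≤ d →
        (({(0 : ZMod (2 * d + 2)), ((v : ℕ) : ZMod (2 * d + 2))} : Finset (ZMod (2 * d + 2))) ∈ T' ↔
         ({(0 : ZMod (2 * d + 2)), ((v : ℕ) : ZMod (2 * d + 2))} : Finset (ZMod (2 * d + 2))) ∈ T ∨ v = w')) ∧
      ({(0 : ZMod (2 * d + 2)), ((w' : ℕ) : ZMod (2 * d + 2))} : Finset (ZMod (2 * d + 2))) ∉ T := by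
  classical
  have hov : (opp (2*d+2) (0 : ZMod (2*d+2))).val = d + 1 := by
    rw [opp_val]; simp
  set a : ZMod (2*d+2) := ((k - 1 : ℕ) : ZMod (2*d+2)) with ha
  have hav : a.val = k - 1 := vcast (by omega)
  have haT : ({(0 : ZMod (2*d+2)), a} : Finset (ZMod (2*d+2))) ∈ T := by
    rcases eq_or_lt_of_le hk2 with h2 | h3
    · have h1 : a = (0 : ZMod (2*d+2)) + 1 := by
        rw [ha, ← h2]; push_cast; ring
      rw [h1]; exact boundary_mem hT.1 0
    · exact hkmin (k - 1) (by omega) (by omega)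
  have haT' : ({a, (0 : ZMod (2*d+2))} : Finset (ZMod (2*d+2))) ∈ T := by
    rw [Finset.pair_comm]; exact haT
  have h2e : 2 ≤ ((0 : ZMod (2*d+2)) - a).val := by
    rw [val_sub', hav, ZMod.val_zero]; split_ifs <;> omega
  obtain ⟨z, hzs, hazT, hz0T⟩ := ear hT.1 haT' h2e
  have hvz := ZMod.val_lt z
  have hZ1 : k - 1 < z.val := by
    have h1 := hzs.1
    rw [val_sub', hav] at h1
    have h2' := hzs.2
    rw [val_sub', val_sub', hav, ZMod.val_zero] at h2'
    split_ifs at h1 h2' <;> omega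
  have hZk : z.val ≠ k := by
    intro h
    apply hkout
    have : ((k : ℕ) : ZMod (2*d+2)) = z := val_inj (by rw [vcast (by omega), h])
    rw [this, Finset.pair_comm]; exact hz0T
  have hZd : z.val ≤ d + 1 := by
    by_contra hc
    push_neg at hc
    have hcr : Crosses (2*d+2) ({(0 : ZMod (2*d+2)), opp (2*d+2) 0} : Finset (ZMod (2*d+2)))
        ({a, z} : Finset (ZMod (2*d+2))) := by
      apply crosses_intro
      · rw [Sbtw, val_sub', val_sub', hav, hov, ZMod.val_zero]
        split_ifs <;> omega
      · rw [Sbtw, val_sub', val_sub', hov, ZMod.val_zero]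
        split_ifs <;> omega
    exact hT.1.2.1 _ hdiag _ hazT hcr
  have h2e' : 2 ≤ (z - a).val := by
    rw [val_sub', hav]; split_ifs <;> omega
  obtain ⟨w, hws, hawT, hwzT⟩ := ear hT.1 hazT h2e'
  have hvw := ZMod.val_lt w
  have hW : k ≤ w.val ∧ w.val < z.val := by
    have h1 := hws.1
    have h2' := hws.2
    rw [val_sub', hav] at h1
    rw [val_sub', val_sub', hav] at h2'
    constructor <;> (split_ifs at h1 h2' <;> omega)
  -- opp vals
  have hova : (opp (2*d+2) a).val = k + d := by
    rw [opp_val, hav, if_pos (by omega)]; omega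
  have hovw : (opp (2*d+2) w).val = w.val + d + 1 := by
    rw [opp_val, if_pos (by omega)]; omega
  have hovz : (opp (2*d+2) z).val = z.val + d + 1 ∨
      (z.val = d + 1 ∧ (opp (2*d+2) z).val = 0) := by
    rcases le_or_gt z.val d with h | h
    · left; rw [opp_val, if_pos h]; omega
    · right; exact ⟨by omega, by rw [opp_val, if_neg (by omega)]; omega⟩
  set f : Finset (ZMod (2*d+2)) := {a, z} with hf
  set fb : Finset (ZMod (2*d+2)) := {opp (2*d+2) a, opp (2*d+2) z} with hfb
  set g : Finset (ZMod (2*d+2)) := {w, (0 : ZMod (2*d+2))} with hg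
  set gb : Finset (ZMod (2*d+2)) := {opp (2*d+2) w, opp (2*d+2) 0} with hgb
  set T' : Set (Finset (ZMod (2*d+2))) := (T \ {f, fb}) ∪ {g, gb} with hT'
  have memT' : ∀ e, e ∈ T' ↔ ((e ∈ T ∧ e ≠ f ∧ e ≠ fb) ∨ e = g ∨ e = gb) := by
    intro e
    simp only [hT', Set.mem_union, Set.mem_diff, Set.mem_insert_iff, Set.mem_singleton_iff]
    tauto

  have hfg : Crosses (2*d+2) f g := by
    refine crosses_intro hws ?_
    rw [Sbtw, val_sub', val_sub', hav, ZMod.val_zero]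
    split_ifs <;> omega
  have hgT : g ∉ T := fun hgT => hT.1.2.1 _ hazT _ hgT hfg
  -- translation by d+1
  set t : ZMod (2*d+2) := ((d + 1 : ℕ) : ZMod (2*d+2)) with ht
  have hoppt : ∀ v : ZMod (2*d+2), opp (2*d+2) v = v + t := fun v => opp_eq d v
  have htt : ∀ v : ZMod (2*d+2), v + t + t = v := by
    intro v
    rw [add_assoc, ht, ← Nat.cast_add,
      show (d + 1) + (d + 1) = 2 * d + 2 by omega, ZMod.natCast_self, add_zero]
  have img2 : ∀ u v : ZMod (2*d+2),
      (({u, v} : Finset (ZMod (2*d+2))).image (· + t)).image (· + t) = {u, v} := by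
    intro u v; rw [image_pair, image_pair, htt, htt]
  have img_f : f.image (· + t) = fb := by
    rw [hf, hfb, image_pair, hoppt, hoppt]
  have img_fb : fb.image (· + t) = f := by
    rw [← img_f, img2, hf]
  have img_g : g.image (· + t) = gb := by
    rw [hg, hgb, image_pair, hoppt, hoppt]
  have img_gb : gb.image (· + t) = g := by
    rw [← img_g, img2, hg]
  -- central symmetry of T'
  have hCS' : IsCS (2*d+2) T' := by
    intro p q hpq
    rw [memT'] at hpq ⊢
    rcases hpq with ⟨hmem, hne1, hne2⟩ | hpq | hpq
    · refine Or.inl ⟨hT.2 p q hmem, ?_, ?_⟩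
      · intro h
        apply hne2
        have := congrArg (fun s => Finset.image (opp (2*d+2)) s) h
        simp only [image_pair, opp_opp] at this
        rw [this, hfb, hf, image_pair]
      · intro h
        apply hne1
        have := congrArg (fun s => Finset.image (opp (2*d+2)) s) h
        simp only [image_pair, opp_opp] at this
        rw [this, hf, hfb, image_pair, opp_opp, opp_opp]
    · rcases pair_eq.mp hpq with ⟨rfl, rfl⟩ | ⟨rfl, rfl⟩
      · exact Or.inr (Or.inr rfl)
      · exact Or.inr (Or.inr (Finset.pair_comm _ _))
    · rcases pair_eq.mp hpq with ⟨rfl, rfl⟩ | ⟨rfl, rfl⟩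
      · rw [opp_opp, opp_opp]; exact Or.inr (Or.inl rfl)
      · rw [opp_opp, opp_opp]; exact Or.inr (Or.inl (Finset.pair_comm _ _))
  -- quad edges in T'
  have mem_aw : ({a, w} : Finset (ZMod (2*d+2))) ∈ T' := by
    refine (memT' _).mpr (Or.inl ⟨hawT, ?_, ?_⟩)
    · intro h; rcases pair_val h with ⟨h1, h2⟩ | ⟨h1, h2⟩ <;> omega
    · intro h
      rcases pair_val h with ⟨h1, h2⟩ | ⟨h1, h2⟩ <;>
        rcases hovz with hz' | ⟨hz1, hz2⟩ <;> omega
  have mem_wz : ({w, z} : Finset (ZMod (2*d+2))) ∈ T' := by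
    refine (memT' _).mpr (Or.inl ⟨hwzT, ?_, ?_⟩)
    · intro h; rcases pair_val h with ⟨h1, h2⟩ | ⟨h1, h2⟩ <;> omega
    · intro h
      rcases pair_val h with ⟨h1, h2⟩ | ⟨h1, h2⟩ <;>
        rcases hovz with hz' | ⟨hz1, hz2⟩ <;> omega
  have mem_z0 : ({z, (0 : ZMod (2*d+2))} : Finset (ZMod (2*d+2))) ∈ T' := by
    refine (memT' _).mpr (Or.inl ⟨hz0T, ?_, ?_⟩)
    · intro h
      rcases pair_val h with ⟨h1, h2⟩ | ⟨h1, h2⟩ <;>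
        rw [ZMod.val_zero] at * <;> omega
    · intro h
      rcases pair_val h with ⟨h1, h2⟩ | ⟨h1, h2⟩ <;>
        rw [ZMod.val_zero] at * <;>
        rcases hovz with hz' | ⟨hz1, hz2⟩ <;> omega
  have mem_0a : ({(0 : ZMod (2*d+2)), a} : Finset (ZMod (2*d+2))) ∈ T' := by
    refine (memT' _).mpr (Or.inl ⟨haT, ?_, ?_⟩)
    · intro h
      rcases pair_val h with ⟨h1, h2⟩ | ⟨h1, h2⟩ <;>
        rw [ZMod.val_zero] at * <;> omega
    · intro h
      rcases pair_val h with ⟨h1, h2⟩ | ⟨h1, h2⟩ <;>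
        rw [ZMod.val_zero] at * <;>
        rcases hovz with hz' | ⟨hz1, hz2⟩ <;> omega
  have mem_g : g ∈ T' := (memT' _).mpr (Or.inr (Or.inl rfl))
  have mem_gb : gb ∈ T' := (memT' _).mpr (Or.inr (Or.inr rfl))
  have hdiag' : ({(0 : ZMod (2*d+2)), opp (2*d+2) 0} : Finset (ZMod (2*d+2))) ∈ T' := by
    refine (memT' _).mpr (Or.inl ⟨hdiag, ?_, ?_⟩)
    · intro h
      rcases pair_val h with ⟨h1, h2⟩ | ⟨h1, h2⟩ <;>
        rw [ZMod.val_zero] at * <;> omega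
    · intro h
      rcases pair_val h with ⟨h1, h2⟩ | ⟨h1, h2⟩ <;>
        rw [ZMod.val_zero] at * <;>
        rcases hovz with hz' | ⟨hz1, hz2⟩ <;> omega
  -- P1: g crosses nothing in T except f
  have P1 : ∀ h ∈ T, h ≠ f → ¬ Crosses (2*d+2) g h := by
    intro h hhT hhf hc
    obtain ⟨c, c', hfe, hc1, hc2⟩ := crosses_elim hc
    have hvc := ZMod.val_lt c
    have hvc' := ZMod.val_lt c'
    have hC'W : 0 < c'.val ∧ c'.val < w.val := by
      have h1 := hc2.1
      have h2' := hc2.2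
      rw [val_sub', ZMod.val_zero] at h1
      rw [val_sub', val_sub', ZMod.val_zero] at h2'
      constructor <;> (split_ifs at h1 h2' <;> omega)
    have hCW : w.val < c.val := by
      have h1 := hc1.1
      have h2' := hc1.2
      rw [val_sub'] at h1
      rw [val_sub', val_sub', ZMod.val_zero] at h2'
      split_ifs at h1 h2' <;> omega
    rcases lt_trichotomy c'.val (k - 1) with hA | hA | hA
    · -- h crosses {0, a}
      refine hT.1.2.1 _ haT _ hhT ?_
      rw [hfe.trans (Finset.pair_comm c c')]
      refine crosses_intro ?_ ?_
      · rw [Sbtw, val_sub', val_sub', hav, ZMod.val_zero]; split_ifs <;> omega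
      · rw [Sbtw, val_sub', val_sub', hav, ZMod.val_zero]; split_ifs <;> omega
    · -- c' = a
      have hc'a : c' = a := val_inj (by rw [hav]; exact hA)
      rcases lt_trichotomy c.val z.val with hB | hB | hB
      · refine hT.1.2.1 _ hwzT _ hhT ?_
        rw [hfe]
        refine crosses_intro ?_ ?_
        · rw [Sbtw, val_sub', val_sub']; split_ifs <;> omega
        · rw [hc'a, Sbtw, val_sub', val_sub', hav]; split_ifs <;> omega
      · have hcz : c = z := val_inj hB
        apply hhf
        rw [hfe, hcz, hc'a, hf, Finset.pair_comm]
      · refine hT.1.2.1 _ hz0T _ hhT ?_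
        rw [hfe]
        refine crosses_intro ?_ ?_
        · rw [Sbtw, val_sub', val_sub', ZMod.val_zero]; split_ifs <;> omega
        · rw [hc'a, Sbtw, val_sub', val_sub', hav, ZMod.val_zero]; split_ifs <;> omega
    · -- c' in (a, w): h crosses {a, w}
      refine hT.1.2.1 _ hawT _ hhT ?_
      rw [hfe.trans (Finset.pair_comm c c')]
      refine crosses_intro ?_ ?_
      · rw [Sbtw, val_sub', val_sub', hav]; split_ifs <;> omega
      · rw [Sbtw, val_sub', val_sub', hav]; split_ifs <;> omega
  have P1b : ∀ h ∈ T, h ≠ fb → ¬ Crosses (2*d+2) gb h := by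
    intro h hhT hhfb hc
    obtain ⟨p, q, hpq, rfl⟩ := hT.1.1 h hhT
    have himg : (({p, q} : Finset (ZMod (2*d+2))).image (· + t)) =
        ({opp (2*d+2) p, opp (2*d+2) q} : Finset (ZMod (2*d+2))) := by
      rw [image_pair, hoppt, hoppt]
    have hc2 := crosses_add t hc
    rw [img_gb, himg] at hc2
    refine P1 _ (hT.2 p q hhT) ?_ hc2
    intro hcon
    apply hhfb
    have := congrArg (fun s => Finset.image (· + t) s) hcon
    rw [← himg, img2, img_f] at this
    exact this
  have notgg : ¬ Crosses (2*d+2) g g := by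
    intro hc
    obtain ⟨c, c', hfe, hc1, hc2⟩ := crosses_elim hc
    have hC' : 0 < c'.val ∧ c'.val < w.val := by
      have h1 := hc2.1
      have h2' := hc2.2
      rw [val_sub', ZMod.val_zero] at h1
      rw [val_sub', val_sub', ZMod.val_zero] at h2'
      constructor <;> (split_ifs at h1 h2' <;> omega)
    rcases pair_val hfe.symm with ⟨h1, h2⟩ | ⟨h1, h2⟩ <;> rw [ZMod.val_zero] at * <;> omega
  have notggb : ¬ Crosses (2*d+2) g gb := by
    intro hc
    obtain ⟨c, c', hfe, hc1, hc2⟩ := crosses_elim hc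
    have hC' : 0 < c'.val ∧ c'.val < w.val := by
      have h1 := hc2.1
      have h2' := hc2.2
      rw [val_sub', ZMod.val_zero] at h1
      rw [val_sub', val_sub', ZMod.val_zero] at h2'
      constructor <;> (split_ifs at h1 h2' <;> omega)
    rcases pair_val hfe.symm with ⟨h1, h2⟩ | ⟨h1, h2⟩ <;> omega
  have notgbg : ¬ Crosses (2*d+2) gb g := by
    intro hc
    have := crosses_add t hc
    rw [img_gb, img_g] at this
    exact notggb this
  have notgbgb : ¬ Crosses (2*d+2) gb gb := by
    intro hc
    have := crosses_add t hc
    rw [img_gb] at this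
    exact notgg this
  -- key uniqueness lemma
  have Q : ∀ e : Finset (ZMod (2*d+2)), (∀ h' ∈ T', ¬ Crosses (2*d+2) e h') →
      Crosses (2*d+2) e f → e = g := by
    intro e hnc hc
    obtain ⟨c, c', hfe, h1, h2⟩ := crosses_elim (crosses_symm hc)
    have hvc := ZMod.val_lt c
    have hvc' := ZMod.val_lt c'
    have hCb : k ≤ c.val ∧ c.val < z.val := by
      have ha1 := h1.1
      have ha2 := h1.2
      rw [val_sub', hav] at ha1
      rw [val_sub', val_sub', hav] at ha2
      constructor <;> (split_ifs at ha1 ha2 <;> omega)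
    have hD : z.val < c'.val ∨ (0 < c'.val ∧ c'.val + 1 ≤ k - 1) ∨ c'.val = 0 := by
      have ha1 := h2.1
      have ha2 := h2.2
      rw [val_sub'] at ha1
      rw [val_sub', val_sub', hav] at ha2
      split_ifs at ha1 ha2 <;> omega
    rcases lt_trichotomy c.val w.val with hB | hB | hB
    · exfalso
      refine hnc _ mem_aw (crosses_symm ?_)
      rw [hfe]
      refine crosses_intro ?_ ?_
      · rw [Sbtw, val_sub', val_sub', hav]; split_ifs <;> omega
      · rw [Sbtw, val_sub', val_sub', hav]
        rcases hD with hD | ⟨hD0, hD⟩ | hD <;> (split_ifs <;> omega)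
    · have hcw : c = w := val_inj hB
      rcases hD with hD | ⟨hD0, hD⟩ | hD
      · exfalso
        refine hnc _ mem_z0 (crosses_symm ?_)
        rw [hfe.trans (Finset.pair_comm c c')]
        refine crosses_intro ?_ ?_
        · rw [Sbtw, val_sub', val_sub', ZMod.val_zero]; split_ifs <;> omega
        · rw [hcw, Sbtw, val_sub', val_sub', ZMod.val_zero]; split_ifs <;> omega
      · exfalso
        refine hnc _ mem_0a (crosses_symm ?_)
        rw [hfe.trans (Finset.pair_comm c c')]
        refine crosses_intro ?_ ?_
        · rw [Sbtw, val_sub', val_sub', hav, ZMod.val_zero]; split_ifs <;> omega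
        · rw [hcw, Sbtw, val_sub', val_sub', hav, ZMod.val_zero]; split_ifs <;> omega
      · have hc'0 : c' = (0 : ZMod (2*d+2)) := val_inj (by rw [ZMod.val_zero]; exact hD)
        rw [hfe, hcw, hc'0, hg]
    · exfalso
      refine hnc _ mem_wz (crosses_symm ?_)
      rw [hfe]
      refine crosses_intro ?_ ?_
      · rw [Sbtw, val_sub', val_sub']; split_ifs <;> omega
      · rw [Sbtw, val_sub', val_sub']
        rcases hD with hD | ⟨hD0, hD⟩ | hD <;> (split_ifs <;> omega)
  -- T' is a triangulation
  have hT'edge : ∀ e ∈ T', IsEdge (2*d+2) e := by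
    intro e he
    rcases (memT' e).mp he with ⟨h1, _, _⟩ | h | h
    · exact hT.1.1 e h1
    · refine ⟨w, 0, ?_, h⟩
      intro hcon
      have h2 := congrArg ZMod.val hcon
      rw [ZMod.val_zero] at h2
      omega
    · refine ⟨opp (2*d+2) w, opp (2*d+2) 0, ?_, h⟩
      intro hcon
      have := congrArg ZMod.val hcon
      omega
  have hT'pair : ∀ e ∈ T', ∀ h ∈ T', ¬ Crosses (2*d+2) e h := by
    intro e he h hh
    rcases (memT' e).mp he with ⟨he1, he2, he3⟩ | rfl | rfl <;>
      rcases (memT' h).mp hh with ⟨hh1, hh2, hh3⟩ | rfl | rfl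
    · exact hT.1.2.1 _ he1 _ hh1
    · exact fun hc => P1 _ he1 he2 (crosses_symm hc)
    · exact fun hc => P1b _ he1 he3 (crosses_symm hc)
    · exact P1 _ hh1 hh2
    · exact notgg
    · exact notggb
    · exact P1b _ hh1 hh3
    · exact notgbg
    · exact notgbgb
  have hT'max : ∀ e, IsEdge (2*d+2) e →
      (∀ h ∈ T', ¬ Crosses (2*d+2) e h ∧ ¬ Crosses (2*d+2) h e) → e ∈ T' := by
    intro e hedge hcr
    obtain ⟨u, v, huv, rfl⟩ := hedge
    by_cases heT : ({u, v} : Finset (ZMod (2*d+2))) ∈ T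
    · by_cases hef : ({u, v} : Finset (ZMod (2*d+2))) = f
      · exact absurd (hef ▸ hfg) ((hcr g mem_g).1)
      by_cases hefb : ({u, v} : Finset (ZMod (2*d+2))) = fb
      · exfalso
        refine (hcr gb mem_gb).1 ?_
        have := crosses_add t hfg
        rw [img_f, img_g] at this
        exact hefb ▸ this
      · exact (memT' _).mpr (Or.inl ⟨heT, hef, hefb⟩)
    · have hex : ∃ h ∈ T, Crosses (2*d+2) ({u, v} : Finset (ZMod (2*d+2))) h := by
        by_contra hno
        push_neg at hno
        exact heT (hT.1.2.2 _ ⟨u, v, huv, rfl⟩ fun h hh =>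
          ⟨hno h hh, fun hc => hno h hh (crosses_symm hc)⟩)
      obtain ⟨h, hhT, hce⟩ := hex
      by_cases hh1 : h = f
      · exact (memT' _).mpr (Or.inr (Or.inl
          (Q _ (fun h' hh' => (hcr h' hh').1) (hh1 ▸ hce))))
      by_cases hh2 : h = fb
      · have hce' : Crosses (2*d+2) (({u, v} : Finset (ZMod (2*d+2))).image (· + t)) f := by
          have := crosses_add t hce
          rwa [hh2, img_fb] at this
        have hnc' : ∀ h' ∈ T', ¬ Crosses (2*d+2)
            (({u, v} : Finset (ZMod (2*d+2))).image (· + t)) h' := by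
          intro h' hh' hc
          obtain ⟨p, q, hpq, rfl⟩ := hT'edge h' hh'
          have hc2 := crosses_add t hc
          rw [img2] at hc2
          have himg : (({p, q} : Finset (ZMod (2*d+2))).image (· + t)) =
              ({opp (2*d+2) p, opp (2*d+2) q} : Finset (ZMod (2*d+2))) := by
            rw [image_pair, hoppt, hoppt]
          rw [himg] at hc2
          exact (hcr _ (hCS' p q hh')).1 hc2
        have := Q _ hnc' hce'
        have h2 := congrArg (fun s => Finset.image (· + t) s) this
        simp only at h2
        rw [img2, img_g] at h2
        exact (memT' _).mpr (Or.inr (Or.inr h2))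
      · exact absurd hce ((hcr h ((memT' _).mpr (Or.inl ⟨hhT, hh1, hh2⟩))).1)
  have hT'cst : IsCST (2*d+2) T' := ⟨⟨hT'edge, hT'pair, hT'max⟩, hCS'⟩
  -- not boundary
  have hnb : ¬ IsBoundaryEdge (2*d+2) ({a, z} : Finset (ZMod (2*d+2))) := by
    rintro ⟨p, hp⟩
    have hppv := val_add_one d p
    rcases pair_val hp with ⟨h1, h2⟩ | ⟨h1, h2⟩ <;> (split_ifs at hppv <;> omega)
  -- the flip
  have hflip : IsFlip (2*d+2) T T' := by
    refine ⟨hT, hT'cst, a, z, w, 0, hnb, hazT, hawT, hwzT, hz0T, haT, ?_⟩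
    rw [hT', hf, hfb, hg, hgb]
  have hAdj : (flipGraph (2*d+2)).Adj T T' := by
    rw [flipGraph, SimpleGraph.fromRel_adj]
    refine ⟨?_, Or.inl hflip⟩
    intro hcon
    exact hgT (hcon ▸ mem_g)
  -- the measure facts
  refine ⟨T', w.val, hT'cst, hAdj, hdiag', by omega, by omega, ?_, ?_⟩
  · intro v hv2 hvd
    have hvv : ((v : ℕ) : ZMod (2*d+2)).val = v := vcast (by omega)
    rw [memT']
    constructor
    · rintro (⟨h1, _, _⟩ | h | h)
      · exact Or.inl h1
      · rcases pair_val h with ⟨h1, h2⟩ | ⟨h1, h2⟩ <;> rw [ZMod.val_zero] at * <;> omega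
      · exfalso
        rcases pair_val h with ⟨h1, h2⟩ | ⟨h1, h2⟩ <;> rw [ZMod.val_zero] at * <;> omega
    · rintro (h | rfl)
      · refine Or.inl ⟨h, ?_, ?_⟩
        · intro hcon
          rcases pair_val hcon with ⟨h1, h2⟩ | ⟨h1, h2⟩ <;> rw [ZMod.val_zero] at * <;> omega
        · intro hcon
          rcases pair_val hcon with ⟨h1, h2⟩ | ⟨h1, h2⟩ <;> rw [ZMod.val_zero] at * <;>
            rcases hovz with hz' | ⟨hz1, hz2⟩ <;> omega
      · refine Or.inr (Or.inl ?_)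
        have : ((w.val : ℕ) : ZMod (2*d+2)) = w := val_inj (by rw [vcast (by omega)])
        rw [this, hg, Finset.pair_comm]
  · intro hcon
    apply hgT
    have : ((w.val : ℕ) : ZMod (2*d+2)) = w := val_inj (by rw [vcast (by omega)])
    rw [this] at hcon
    rwa [hg, Finset.pair_comm]

lemma mem_uminus (d : ℕ) (e : Finset (ZMod (2 * d + 2))) :
    e ∈ UminusSet d ↔ (IsBoundaryEdge (2 * d + 2) e ∨
      ((e = ({(0 : ZMod (2 * d + 2)), opp (2 * d + 2) 0} : Finset (ZMod (2 * d + 2))) ∨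
        ∃ x : ℕ, 2 ≤ x ∧ x ≤ d ∧
          e = ({(0 : ZMod (2 * d + 2)), (x : ZMod (2 * d + 2))} : Finset (ZMod (2 * d + 2)))) ∨
       (∃ s, (s = ({(0 : ZMod (2 * d + 2)), opp (2 * d + 2) 0} : Finset (ZMod (2 * d + 2))) ∨
         ∃ x : ℕ, 2 ≤ x ∧ x ≤ d ∧
           s = ({(0 : ZMod (2 * d + 2)), (x : ZMod (2 * d + 2))} : Finset (ZMod (2 * d + 2)))) ∧
         s.image (opp (2 * d + 2)) = e))) :=
  Iff.rfl

lemma uminus_opp (d : ℕ) {u v : ZMod (2 * d + 2)}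
    (h : ({u, v} : Finset (ZMod (2 * d + 2))) ∈ UminusSet d) :
    ({opp (2 * d + 2) u, opp (2 * d + 2) v} : Finset (ZMod (2 * d + 2))) ∈ UminusSet d := by
  rw [mem_uminus] at h ⊢
  rcases h with ⟨x, hx⟩ | h | ⟨s, hs, himg⟩
  · left
    rcases pair_eq.mp hx with ⟨rfl, rfl⟩ | ⟨rfl, rfl⟩
    · exact ⟨opp (2*d+2) u, by rw [opp_eq, opp_eq, add_right_comm]⟩
    · exact ⟨opp (2*d+2) v, by rw [opp_eq, opp_eq, add_right_comm, Finset.pair_comm]⟩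
  · right; right
    exact ⟨{u, v}, h, by rw [image_pair]⟩
  · right; left
    obtain (rfl | ⟨x, hx1, hx2, rfl⟩) := hs <;> rw [image_pair] at himg <;>
      rcases pair_eq.mp himg.symm with ⟨rfl, rfl⟩ | ⟨rfl, rfl⟩
    · left; simp only [opp_opp]
    · left; simp only [opp_opp]; rw [Finset.pair_comm]
    · right; exact ⟨x, hx1, hx2, by simp only [opp_opp]⟩
    · right; exact ⟨x, hx1, hx2, by simp only [opp_opp]; rw [Finset.pair_comm]⟩

lemma base_case (d : ℕ) (hd : 1 ≤ d) (T : Set (Finset (ZMod (2 * d + 2))))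
    (hT : IsCST (2 * d + 2) T)
    (hdiag : ({(0 : ZMod (2 * d + 2)), opp (2 * d + 2) 0} : Finset (ZMod (2 * d + 2))) ∈ T)
    (hall : ∀ v : ℕ, 2 ≤ v → v ≤ d →
      ({(0 : ZMod (2 * d + 2)), ((v : ℕ) : ZMod (2 * d + 2))} : Finset (ZMod (2 * d + 2))) ∈ T) :
    T = UminusSet d := by
  have hov : (opp (2*d+2) (0 : ZMod (2*d+2))).val = d + 1 := by rw [opp_val]; simp
  have hA : ∀ p q : ZMod (2*d+2), ({p, q} : Finset (ZMod (2*d+2))) ∈ T →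
      p.val < q.val → q.val ≤ d + 1 → ({p, q} : Finset (ZMod (2*d+2))) ∈ UminusSet d := by
    intro p q hpq hlt hqd
    by_cases hQP : q.val = p.val + 1
    · rw [mem_uminus]; left
      refine ⟨p, ?_⟩
      have : q = p + 1 := by
        apply val_inj
        rw [val_add_one, if_neg (by omega), hQP]
      rw [this]
    · -- q.val ≥ p.val + 2
      by_cases hP0 : p.val = 0
      · have hp : p = (0 : ZMod (2*d+2)) := val_inj (by rw [ZMod.val_zero]; exact hP0)
        rcases Nat.lt_or_ge q.val (d+1) with hQ | hQ
        · -- q.val in [2, d]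
          rw [mem_uminus]; right; left; right
          refine ⟨q.val, by omega, by omega, ?_⟩
          have hq' : ((q.val : ℕ) : ZMod (2*d+2)) = q := val_inj (vcast (k := q.val) (by omega))
          rw [hp, hq']
        · -- q.val = d+1
          have hq : q = opp (2*d+2) (0 : ZMod (2*d+2)) := val_inj (by omega)
          rw [mem_uminus]; right; left; left
          rw [hp, hq]
      · -- 1 ≤ p.val, q.val ≥ p.val + 2 : crossing with {0, p.val+1}
        exfalso
        have hmem : ({((p.val + 1 : ℕ) : ZMod (2*d+2)), (0 : ZMod (2*d+2))} :
            Finset (ZMod (2*d+2))) ∈ T := by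
          rw [Finset.pair_comm]; exact hall (p.val + 1) (by omega) (by omega)
        have hc : Crosses (2*d+2) ({p, q} : Finset (ZMod (2*d+2)))
            ({((p.val + 1 : ℕ) : ZMod (2*d+2)), (0 : ZMod (2*d+2))} : Finset (ZMod (2*d+2))) := by
          have hvv : ((p.val + 1 : ℕ) : ZMod (2*d+2)).val = p.val + 1 := vcast (by omega)
          have hvq := ZMod.val_lt q
          refine crosses_intro ?_ ?_
          · rw [Sbtw, val_sub', val_sub', hvv]; split_ifs <;> omega
          · rw [Sbtw, val_sub', val_sub', ZMod.val_zero]; split_ifs <;> omega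
        exact hT.1.2.1 _ hpq _ hmem hc
  have hB : ∀ p q : ZMod (2*d+2), ({p, q} : Finset (ZMod (2*d+2))) ∈ T →
      p.val < q.val → ({p, q} : Finset (ZMod (2*d+2))) ∈ UminusSet d := by
    intro p q hpq hlt
    have hvq := ZMod.val_lt q
    have hvp := ZMod.val_lt p
    rcases le_or_gt q.val (d+1) with hQ | hQ
    · exact hA p q hpq hlt hQ
    by_cases hP0 : p.val = 0
    · rcases Nat.lt_or_ge q.val (2*d+1) with hQ2 | hQ2
      · -- q.val in [d+2, 2d] : contradiction
        exfalso
        have h1 : ({(0 : ZMod (2*d+2)), ((q.val - d : ℕ) : ZMod (2*d+2))} :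
            Finset (ZMod (2*d+2))) ∈ T := hall (q.val - d) (by omega) (by omega)
        have h2 := hT.2 _ _ h1
        have hv1 : (opp (2*d+2) ((q.val - d : ℕ) : ZMod (2*d+2))).val = q.val + 1 := by
          rw [opp_val, vcast (by omega), if_pos (by omega)]; omega
        have hc : Crosses (2*d+2) ({p, q} : Finset (ZMod (2*d+2)))
            ({opp (2*d+2) (0 : ZMod (2*d+2)),
              opp (2*d+2) ((q.val - d : ℕ) : ZMod (2*d+2))} : Finset (ZMod (2*d+2))) := by
          refine crosses_intro ?_ ?_
          · rw [Sbtw, val_sub', val_sub', hov]; split_ifs <;> omega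
          · rw [Sbtw, val_sub', val_sub', hv1]; split_ifs <;> omega
        exact hT.1.2.1 _ hpq _ h2 hc
      · -- q.val = 2d+1, p.val = 0 : boundary
        rw [mem_uminus]; left
        refine ⟨q, ?_⟩
        have : p = q + 1 := by
          apply val_inj
          rw [val_add_one, if_pos (by omega)]; omega
        rw [this, Finset.pair_comm]
    · rcases le_or_gt p.val d with hPd | hPd
      · -- crossing the diagonal
        exfalso
        have hdiag2 : ({opp (2*d+2) (0 : ZMod (2*d+2)), (0 : ZMod (2*d+2))} :
            Finset (ZMod (2*d+2))) ∈ T := by rw [Finset.pair_comm]; exact hdiag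
        have hc : Crosses (2*d+2) ({p, q} : Finset (ZMod (2*d+2)))
            ({opp (2*d+2) (0 : ZMod (2*d+2)), (0 : ZMod (2*d+2))} : Finset (ZMod (2*d+2))) := by
          refine crosses_intro ?_ ?_
          · rw [Sbtw, val_sub', val_sub', hov]; split_ifs <;> omega
          · rw [Sbtw, val_sub', val_sub', ZMod.val_zero]; split_ifs <;> omega
        exact hT.1.2.1 _ hpq _ hdiag2 hc
      · -- both ≥ d+1 : use central symmetry
        have h2 := hT.2 _ _ hpq
        have hvop : (opp (2*d+2) p).val = p.val - (d+1) := by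
          rw [opp_val, if_neg (by omega)]
        have hvoq : (opp (2*d+2) q).val = q.val - (d+1) := by
          rw [opp_val, if_neg (by omega)]
        have := hA _ _ h2 (by omega) (by omega)
        have h3 := uminus_opp d this
        rwa [opp_opp, opp_opp] at h3
  ext e
  constructor
  · intro heT
    obtain ⟨u, v, huv, rfl⟩ := hT.1.1 e heT
    rcases lt_trichotomy u.val v.val with h | h | h
    · exact hB u v heT h
    · exact absurd (val_inj h) huv
    · rw [Finset.pair_comm]
      exact hB v u (by rwa [Finset.pair_comm] at heT) h
  · intro he
    rw [mem_uminus] at he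
    rcases he with ⟨x, rfl⟩ | h | ⟨s, hs, rfl⟩
    · exact boundary_mem hT.1 x
    · rcases h with rfl | ⟨x, hx1, hx2, rfl⟩
      · exact hdiag
      · exact hall x hx1 hx2
    · rcases hs with rfl | ⟨x, hx1, hx2, rfl⟩
      · rw [image_pair]; exact hT.2 _ _ hdiag
      · rw [image_pair]; exact hT.2 _ _ (hall x hx1 hx2)


open scoped Classical in
lemma reach_aux (d : ℕ) (hd : 1 ≤ d) :
    ∀ (m : ℕ) (T : Set (Finset (ZMod (2 * d + 2)))), IsCST (2 * d + 2) T →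
      ({(0 : ZMod (2 * d + 2)), opp (2 * d + 2) 0} : Finset (ZMod (2 * d + 2))) ∈ T →
      ((Finset.Icc 2 d).filter (fun v : ℕ =>
        ({(0 : ZMod (2 * d + 2)), ((v : ℕ) : ZMod (2 * d + 2))} :
          Finset (ZMod (2 * d + 2))) ∉ T)).card ≤ m →
      ∃ p : (flipGraph (2 * d + 2)).Walk T (UminusSet d), p.length ≤ m := by
  intro m
  induction m with
  | zero =>
    intro T hT hdiag hcard
    have hall : ∀ v : ℕ, 2 ≤ v → v ≤ d →
        ({(0 : ZMod (2 * d + 2)), ((v : ℕ) : ZMod (2 * d + 2))} :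
          Finset (ZMod (2 * d + 2))) ∈ T := by
      intro v h1 h2
      by_contra hout
      have hmem : v ∈ (Finset.Icc 2 d).filter (fun v : ℕ =>
          ({(0 : ZMod (2 * d + 2)), ((v : ℕ) : ZMod (2 * d + 2))} :
            Finset (ZMod (2 * d + 2))) ∉ T) :=
        Finset.mem_filter.mpr ⟨Finset.mem_Icc.mpr ⟨h1, h2⟩, hout⟩
      rw [Nat.le_zero, Finset.card_eq_zero] at hcard
      rw [hcard] at hmem
      exact absurd hmem (Finset.notMem_empty v)
    exact ⟨SimpleGraph.Walk.nil.copy rfl (base_case d hd T hT hdiag hall), by simp⟩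
  | succ m ih =>
    intro T hT hdiag hcard
    by_cases h0 : ((Finset.Icc 2 d).filter (fun v : ℕ =>
        ({(0 : ZMod (2 * d + 2)), ((v : ℕ) : ZMod (2 * d + 2))} :
          Finset (ZMod (2 * d + 2))) ∉ T)).card = 0
    · have hall : ∀ v : ℕ, 2 ≤ v → v ≤ d →
          ({(0 : ZMod (2 * d + 2)), ((v : ℕ) : ZMod (2 * d + 2))} :
            Finset (ZMod (2 * d + 2))) ∈ T := by
        intro v h1 h2
        by_contra hout
        have hmem : v ∈ (Finset.Icc 2 d).filter (fun v : ℕ =>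
            ({(0 : ZMod (2 * d + 2)), ((v : ℕ) : ZMod (2 * d + 2))} :
              Finset (ZMod (2 * d + 2))) ∉ T) :=
          Finset.mem_filter.mpr ⟨Finset.mem_Icc.mpr ⟨h1, h2⟩, hout⟩
        rw [Finset.card_eq_zero] at h0
        rw [h0] at hmem
        exact absurd hmem (Finset.notMem_empty v)
      exact ⟨SimpleGraph.Walk.nil.copy rfl (base_case d hd T hT hdiag hall), by simp⟩
    · have hne : ((Finset.Icc 2 d).filter (fun v : ℕ =>
          ({(0 : ZMod (2 * d + 2)), ((v : ℕ) : ZMod (2 * d + 2))} :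
            Finset (ZMod (2 * d + 2))) ∉ T)).Nonempty :=
        Finset.card_pos.mp (by omega)
      set k := ((Finset.Icc 2 d).filter (fun v : ℕ =>
          ({(0 : ZMod (2 * d + 2)), ((v : ℕ) : ZMod (2 * d + 2))} :
            Finset (ZMod (2 * d + 2))) ∉ T)).min' hne with hk
      have hkmem := Finset.min'_mem _ hne
      rw [← hk, Finset.mem_filter, Finset.mem_Icc] at hkmem
      obtain ⟨⟨hk2, hkd⟩, hkout⟩ := hkmem
      have hkmin : ∀ v : ℕ, 2 ≤ v → v < k →
          ({(0 : ZMod (2 * d + 2)), ((v : ℕ) : ZMod (2 * d + 2))} :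
            Finset (ZMod (2 * d + 2))) ∈ T := by
        intro v h1 h2
        by_contra hout
        have hle : k ≤ v := by
          rw [hk]
          exact Finset.min'_le _ v
            (Finset.mem_filter.mpr ⟨Finset.mem_Icc.mpr ⟨h1, by omega⟩, hout⟩)
        omega
      obtain ⟨T', w', hT', hAdj, hdiag', hw1, hw2, hiff, hwout⟩ :=
        flip_step d hd T hT hdiag k hk2 hkd hkout hkmin
      have hfil : ((Finset.Icc 2 d).filter (fun v : ℕ =>
          ({(0 : ZMod (2 * d + 2)), ((v : ℕ) : ZMod (2 * d + 2))} :
            Finset (ZMod (2 * d + 2))) ∉ T')) =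
          ((Finset.Icc 2 d).filter (fun v : ℕ =>
          ({(0 : ZMod (2 * d + 2)), ((v : ℕ) : ZMod (2 * d + 2))} :
            Finset (ZMod (2 * d + 2))) ∉ T)).erase w' := by
        ext v
        simp only [Finset.mem_erase, Finset.mem_filter, Finset.mem_Icc]
        constructor
        · rintro ⟨⟨h1, h2⟩, hout⟩
          refine ⟨?_, ⟨h1, h2⟩, ?_⟩
          · intro hvw
            exact hout ((hiff v h1 h2).mpr (Or.inr hvw))
          · intro hin
            exact hout ((hiff v h1 h2).mpr (Or.inl hin))
        · rintro ⟨hne', ⟨h1, h2⟩, hout⟩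
          refine ⟨⟨h1, h2⟩, fun hin => ?_⟩
          rcases (hiff v h1 h2).mp hin with h | h
          · exact hout h
          · exact hne' h
      have hwmem : w' ∈ ((Finset.Icc 2 d).filter (fun v : ℕ =>
          ({(0 : ZMod (2 * d + 2)), ((v : ℕ) : ZMod (2 * d + 2))} :
            Finset (ZMod (2 * d + 2))) ∉ T)) :=
        Finset.mem_filter.mpr ⟨Finset.mem_Icc.mpr ⟨by omega, hw2⟩, hwout⟩
      have hcard' : ((Finset.Icc 2 d).filter (fun v : ℕ =>
          ({(0 : ZMod (2 * d + 2)), ((v : ℕ) : ZMod (2 * d + 2))} :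
            Finset (ZMod (2 * d + 2))) ∉ T')).card ≤ m := by
        rw [hfil, Finset.card_erase_of_mem hwmem]
        have := Finset.card_pos.mpr hne
        omega
      obtain ⟨p, hp⟩ := ih T' hT' hdiag' hcard'
      exact ⟨SimpleGraph.Walk.cons hAdj p, by
        rw [SimpleGraph.Walk.length_cons]; omega⟩


/-- any centrally symmetric triangulation containing the diagonal
`{0,0̄}` can be transformed into the double comb `U⁻` (whose interior edges are `{0,0̄}`,
`{0,x}` for `2 ≤ x ≤ d` and `{0̄,x̄}` for `2 ≤ x ≤ d`) by at most `d - 1` flips. -/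
theorem comb_upper_bound (d : ℕ) (hd : 1 ≤ d)
    (T : Set (Finset (ZMod (2 * d + 2)))) (hT : IsCST (2 * d + 2) T)
    (hdiag : ({(0 : ZMod (2 * d + 2)), opp (2 * d + 2) 0} : Finset (ZMod (2 * d + 2))) ∈ T) :
    (flipGraph (2 * d + 2)).Reachable T (UminusSet d) ∧
      delta (2 * d + 2) T (UminusSet d) ≤ d - 1 := by
  classical
  obtain ⟨p, hp⟩ := reach_aux d hd
    ((Finset.Icc 2 d).filter (fun v : ℕ =>
        ({(0 : ZMod (2 * d + 2)), ((v : ℕ) : ZMod (2 * d + 2))} :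
          Finset (ZMod (2 * d + 2))) ∉ T)).card T hT hdiag le_rfl
  have hbound : ((Finset.Icc 2 d).filter (fun v : ℕ =>
      ({(0 : ZMod (2 * d + 2)), ((v : ℕ) : ZMod (2 * d + 2))} :
        Finset (ZMod (2 * d + 2))) ∉ T)).card ≤ d - 1 := by
    refine le_trans (Finset.card_filter_le _ _) ?_
    rw [Nat.card_Icc]
    omega
  exact ⟨⟨p⟩, le_trans (SimpleGraph.dist_le p) (le_trans hp hbound)⟩


end Cyclo
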